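/- Let θ be a bilinear form on ℤ^m given by an integer matrix M, and let U ⊆ ℤ^m be a subgroup such that θ restricted to U, represented by a matrix B with respect to some basis of U, satisfies det(t·B − Bᵀ) = ±t^k in ℤ[t]. Then U is a direct summand of ℤ^m. -/

import Mathlib

open Matrix Polynomial

/-- `det (t • M - Mᵀ)` as a polynomial in `t`. -/
noncomputable def polyDet {n : Type*} [Fintype n] [DecidableEq n]
    (M : Matrix n n ℤ) : Polynomial ℤ :=
  (Matrix.of fun i j => C (M i j) * X - C (M j i)).det

theorem stmt3 (m k : ℕ) (M : Matrix (Fin m) (Fin m) ℤ)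
    (u : Fin k → (Fin m → ℤ)) (hu : LinearIndependent ℤ u)
    (B : Matrix (Fin k) (Fin k) ℤ)
    (hB : ∀ i j, B i j = u i ⬝ᵥ M *ᵥ u j)
    (hunit : ∃ l : ℕ, polyDet B = X ^ l ∨ polyDet B = -X ^ l) :
    ∃ V : Submodule ℤ (Fin m → ℤ), IsCompl (Submodule.span ℤ (Set.range u)) V := by
  classical
  set A : Matrix (Fin k) (Fin k) ℤ := B - Bᵀ with hA
  -- det A = ±1
  have hdetA : IsUnit A.det := by
    obtain ⟨l, hl | hl⟩ := hunit
    · have h1 : (polyDet B).eval 1 = A.det := by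
        rw [polyDet, ← coe_evalRingHom, RingHom.map_det]
        congr 1
        ext i j
        simp [A, transpose_apply]
      rw [hl] at h1
      simp only [eval_pow, eval_X, one_pow] at h1
      exact h1 ▸ isUnit_one
    · have h1 : (polyDet B).eval 1 = A.det := by
        rw [polyDet, ← coe_evalRingHom, RingHom.map_det]
        congr 1
        ext i j
        simp [A, transpose_apply]
      rw [hl] at h1
      simp only [eval_neg, eval_pow, eval_X, one_pow] at h1
      exact h1 ▸ (isUnit_one.neg)
  -- the linear map x ↦ (θ'(u i, x))_i
  set N : Matrix (Fin k) (Fin m) ℤ :=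
    Matrix.of (fun i j => (u i ᵥ* M) j - (M *ᵥ u i) j) with hN
  set f : (Fin m → ℤ) →ₗ[ℤ] (Fin k → ℤ) := N.mulVecLin with hf
  have hfu : ∀ j, f (u j) = A *ᵥ Pi.single j 1 := by
    intro j
    ext i
    simp only [Matrix.mulVec_single_one, mul_one]
    show N i ⬝ᵥ u j = A i j
    have hNi : N i = (u i ᵥ* M) - (M *ᵥ u i) := rfl
    rw [hNi, sub_dotProduct, ← Matrix.dotProduct_mulVec,
      dotProduct_comm (M *ᵥ u i), ← hB, ← hB]
    simp [A, transpose_apply]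
  set g : (Fin k → ℤ) →ₗ[ℤ] (Fin m → ℤ) :=
    (Fintype.linearCombination ℤ u).comp (A⁻¹).mulVecLin with hg
  set π : (Fin m → ℤ) →ₗ[ℤ] (Fin m → ℤ) := g.comp f with hπ
  set U : Submodule ℤ (Fin m → ℤ) := Submodule.span ℤ (Set.range u) with hU
  have hπu : ∀ j, π (u j) = u j := by
    intro j
    simp only [hπ, hg, LinearMap.comp_apply, hfu j, Matrix.mulVecLin_apply,
      Matrix.mulVec_mulVec]
    rw [Matrix.nonsing_inv_mul A hdetA, Matrix.one_mulVec,
      Fintype.linearCombination_apply_single, one_smul]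
  have hπmem : ∀ x, π x ∈ U := by
    intro x
    simp only [hπ, hg, LinearMap.comp_apply, Fintype.linearCombination_apply]
    exact Submodule.sum_mem _ fun i _ =>
      Submodule.smul_mem _ _ (Submodule.subset_span ⟨i, rfl⟩)
  have hπfix : ∀ x ∈ U, π x = x := by
    intro x hx
    induction hx using Submodule.span_induction with
    | mem y hy => obtain ⟨j, rfl⟩ := hy; exact hπu j
    | zero => simp
    | add y z _ _ hy hz => rw [map_add, hy, hz]
    | smul a y _ hy => rw [LinearMap.map_smul, hy]
  set p : (Fin m → ℤ) →ₗ[ℤ] U := π.codRestrict U hπmem with hp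
  refine ⟨LinearMap.ker p, LinearMap.isCompl_of_proj ?_⟩
  intro x
  apply Subtype.ext
  rw [LinearMap.codRestrict_apply]
  exact hπfix x x.2
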